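/- For every integer n ≥ 1, define σ : V(Λ_n) → F_2 by σ(g,x) = 1 if g ∈ {(1,0,0,0),(1,0,0,1),(0,1,1,0),(0,1,1,1)} (i.e. g ∈ {a, az, bc, bcz}) and σ(g,x) = 0 otherwise. Then: (i) for every automorphism b of Λ_n that maps each fibre of Λ_n onto some fibre, the vector σ∘b + σ lies in E_1(Λ_n); and (ii) the vertices v = (id, 0) and w = (a, 0) are adjacent in Λ_n, σ(v) = 0, σ(w) = 1, and σ(u) = 0 for every neighbour u of v other than w. -/

import Mathlib

abbrev RSet := ZMod 2 × ZMod 2 × ZMod 2 × ZMod 2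

def rmul (p q : RSet) : RSet :=
  (p.1 + q.1, p.2.1 + q.2.1, p.2.2.1 + q.2.2.1,
   p.2.2.2 + q.2.2.2 + p.2.1 * q.1 + p.2.2.1 * q.2.1 + p.2.2.1 * q.1)

def aR : RSet := (1, 0, 0, 0)
def bR : RSet := (0, 1, 0, 0)
def cR : RSet := (0, 0, 1, 0)
def idR : RSet := (0, 0, 0, 0)
def zR : RSet := (0, 0, 0, 1)
def bcR : RSet := (0, 1, 1, 0)
def bzR : RSet := (0, 1, 0, 1)
def czR : RSet := (0, 0, 1, 1)
def bczR : RSet := (0, 1, 1, 1)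

lemma rmul_aa : ∀ g : RSet, rmul aR (rmul aR g) = g := by decide
lemma rmul_bb : ∀ g : RSet, rmul bR (rmul bR g) = g := by decide
lemma rmul_cc : ∀ g : RSet, rmul cR (rmul cR g) = g := by decide

def MK : SimpleGraph RSet where
  Adj g h := g ≠ h ∧ (h = rmul aR g ∨ h = rmul bR g ∨ h = rmul cR g)
  symm := by
    constructor
    rintro g h ⟨hne, h1 | h1 | h1⟩
    · exact ⟨hne.symm, Or.inl (by rw [h1, rmul_aa])⟩
    · exact ⟨hne.symm, Or.inr (Or.inl (by rw [h1, rmul_bb]))⟩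
    · exact ⟨hne.symm, Or.inr (Or.inr (by rw [h1, rmul_cc]))⟩
  loopless := ⟨fun g hg => hg.1 rfl⟩

/-- Integer quadruples, recording voltages before reduction mod `n`. -/
abbrev ZQuad := ℤ × ℤ × ℤ × ℤ

/-- The voltage assignment `ζ` on the arcs of the Möbius–Kantor graph (with values
written in `ℤ⁴`; `e₁,…,e₄` are the standard basis vectors). -/
def zetaZ (u v : RSet) : ZQuad :=
  if u = idR ∧ v = cR then (1, 0, 0, 0)
  else if u = cR ∧ v = bcR then (0, 1, 0, 0)
  else if u = bcR ∧ v = bzR then (0, 0, 1, 0)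
  else if u = bzR ∧ v = zR then (0, 0, 0, 1)
  else if u = zR ∧ v = czR then (-1, 0, 0, 0)
  else if u = czR ∧ v = bczR then (0, -1, 0, 0)
  else if u = bczR ∧ v = bR then (0, 0, -1, 0)
  else if u = bR ∧ v = idR then (0, 0, 0, -1)
  else if u = cR ∧ v = idR then (-1, 0, 0, 0)
  else if u = bcR ∧ v = cR then (0, -1, 0, 0)
  else if u = bzR ∧ v = bcR then (0, 0, -1, 0)
  else if u = zR ∧ v = bzR then (0, 0, 0, -1)
  else if u = czR ∧ v = zR then (1, 0, 0, 0)
  else if u = bczR ∧ v = czR then (0, 1, 0, 0)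
  else if u = bR ∧ v = bczR then (0, 0, 1, 0)
  else if u = idR ∧ v = bR then (0, 0, 0, 1)
  else 0

lemma zetaZ_anti : ∀ u v : RSet, zetaZ v u = -zetaZ u v := by decide

/-- Quadruples over `ℤ/nℤ`. -/
abbrev NQuad (n : ℕ) := ZMod n × ZMod n × ZMod n × ZMod n

/-- Reduction of an integer quadruple modulo `n`. -/
def castQuad (n : ℕ) (p : ZQuad) : NQuad n :=
  ((p.1 : ZMod n), (p.2.1 : ZMod n), (p.2.2.1 : ZMod n), (p.2.2.2 : ZMod n))

lemma castQuad_neg (n : ℕ) (p : ZQuad) : castQuad n (-p) = -castQuad n p := by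
  simp [castQuad, Prod.ext_iff]

/-- The covering graph `Λ_n` of the Möbius–Kantor graph derived from the voltage
assignment `ζ` with values in `(ℤ/nℤ)⁴`. -/
def Lam (n : ℕ) : SimpleGraph (RSet × NQuad n) where
  Adj p q := MK.Adj p.1 q.1 ∧ q.2 = p.2 + castQuad n (zetaZ p.1 q.1)
  symm := by
    constructor
    rintro ⟨u, x⟩ ⟨v, y⟩ ⟨hadj, hy⟩
    refine ⟨hadj.symm, ?_⟩
    rw [zetaZ_anti u v, castQuad_neg, hy]
    abel
  loopless := ⟨fun p hp => MK.irrefl hp.1⟩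

def azR : RSet := (1, 0, 0, 1)

/-- A permutation `g` of the vertex set is an automorphism of the graph `Γ`. -/
def IsGraphAut {V : Type*} (Γ : SimpleGraph V) (g : Equiv.Perm V) : Prop :=
  ∀ u v : V, Γ.Adj (g u) (g v) ↔ Γ.Adj u v

open scoped Classical in
/-- The 1-eigenspace of the adjacency matrix of `Λ` over `F₂`. -/
noncomputable def eigOne {V : Type*} [Fintype V] (Λ : SimpleGraph V) :
    Submodule (ZMod 2) (V → ZMod 2) :=
  LinearMap.ker (Matrix.toLin' (Λ.adjMatrix (ZMod 2)) - LinearMap.id)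

/-- The vector `σ : V(Λ_n) → F₂` supported on the fibres over `a`, `az`, `bc`, `bcz`. -/
def sigmaVec (n : ℕ) : RSet × NQuad n → ZMod 2 :=
  fun p => if p.1 = aR ∨ p.1 = azR ∨ p.1 = bcR ∨ p.1 = bczR then 1 else 0

/-! ### Auxiliary material -/

/-- The indicator of the set `{a, az, bc, bcz}` on `RSet`. -/
def chiF (u : RSet) : ZMod 2 :=
  if u = aR ∨ u = azR ∨ u = bcR ∨ u = bczR then 1 else 0

lemma sigmaVec_eq_chiF (n : ℕ) (p : RSet × NQuad n) : sigmaVec n p = chiF p.1 := rfl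

lemma chiF_sum : ∀ w : RSet,
    chiF (rmul aR w) + chiF (rmul bR w) + chiF (rmul cR w) = 1 + chiF w := by decide

lemma rmul_a_ne : ∀ g : RSet, rmul aR g ≠ g := by decide
lemma rmul_b_ne : ∀ g : RSet, rmul bR g ≠ g := by decide
lemma rmul_c_ne : ∀ g : RSet, rmul cR g ≠ g := by decide
lemma rmul_ab_ne : ∀ g : RSet, rmul aR g ≠ rmul bR g := by decide
lemma rmul_ac_ne : ∀ g : RSet, rmul aR g ≠ rmul cR g := by decide
lemma rmul_bc_ne : ∀ g : RSet, rmul bR g ≠ rmul cR g := by decide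

lemma MK_adj_a (g : RSet) : MK.Adj g (rmul aR g) := ⟨(rmul_a_ne g).symm, Or.inl rfl⟩
lemma MK_adj_b (g : RSet) : MK.Adj g (rmul bR g) := ⟨(rmul_b_ne g).symm, Or.inr (Or.inl rfl)⟩
lemma MK_adj_c (g : RSet) : MK.Adj g (rmul cR g) := ⟨(rmul_c_ne g).symm, Or.inr (Or.inr rfl)⟩

/-- The three standard neighbours of a vertex of `Λ_n`. -/
def nbr (n : ℕ) (s : RSet) (p : RSet × NQuad n) : RSet × NQuad n :=
  (rmul s p.1, p.2 + castQuad n (zetaZ p.1 (rmul s p.1)))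

lemma Lam_adj_iff (n : ℕ) (p q : RSet × NQuad n) :
    (Lam n).Adj p q ↔ q = nbr n aR p ∨ q = nbr n bR p ∨ q = nbr n cR p := by
  constructor
  · rintro ⟨⟨hne, h1 | h1 | h1⟩, h2⟩
    · exact Or.inl (Prod.ext_iff.mpr ⟨h1, by rw [h2, h1]; rfl⟩)
    · exact Or.inr (Or.inl (Prod.ext_iff.mpr ⟨h1, by rw [h2, h1]; rfl⟩))
    · exact Or.inr (Or.inr (Prod.ext_iff.mpr ⟨h1, by rw [h2, h1]; rfl⟩))
  · rintro (rfl | rfl | rfl)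
    · exact ⟨MK_adj_a p.1, rfl⟩
    · exact ⟨MK_adj_b p.1, rfl⟩
    · exact ⟨MK_adj_c p.1, rfl⟩

open scoped Classical in
lemma mem_eigOne_iff {V : Type*} [Fintype V] (Λ : SimpleGraph V) (f : V → ZMod 2) :
    f ∈ eigOne Λ ↔ ∀ v, (∑ u ∈ Λ.neighborFinset v, f u) = f v := by
  rw [eigOne, LinearMap.mem_ker, LinearMap.sub_apply, LinearMap.id_apply, sub_eq_zero,
    Matrix.toLin'_apply, funext_iff]
  simp only [SimpleGraph.adjMatrix_mulVec_apply]

lemma sum3_perm {M : Type*} [AddCommMonoid M] (f : RSet → M)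
    (x1 x2 x3 y1 y2 y3 : RSet)
    (hx12 : x1 ≠ x2) (hx13 : x1 ≠ x3) (hx23 : x2 ≠ x3)
    (h1 : x1 = y1 ∨ x1 = y2 ∨ x1 = y3)
    (h2 : x2 = y1 ∨ x2 = y2 ∨ x2 = y3)
    (h3 : x3 = y1 ∨ x3 = y2 ∨ x3 = y3) :
    f x1 + f x2 + f x3 = f y1 + f y2 + f y3 := by
  rcases h1 with rfl | rfl | rfl <;> rcases h2 with rfl | rfl | rfl <;>
    rcases h3 with rfl | rfl | rfl <;>
      first
        | exact absurd rfl hx12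
        | exact absurd rfl hx13
        | exact absurd rfl hx23
        | abel

lemma zmod2_helper : ∀ x y : ZMod 2, (1 + x) + (1 + y) = x + y := by decide

lemma zetaZ_id_a : zetaZ idR (rmul aR idR) = 0 := by decide

lemma castQuad_zero (n : ℕ) : castQuad n (0 : ZQuad) = 0 := by
  simp [castQuad, Prod.ext_iff]

/-- The vector `σ` satisfies: (i) `σ∘b + σ ∈ E₁(Λ_n)` for every fibre-preserving
automorphism `b` of `Λ_n`; and (ii) `v = (id,0)` and `w = (a,0)` are adjacent, with
`σ(v) = 0`, `σ(w) = 1` and `σ(u) = 0` for every other neighbour `u` of `v`. -/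
theorem statement14 (n : ℕ) (hn : 1 ≤ n) :
    haveI : NeZero n := ⟨by omega⟩
    (∀ g : Equiv.Perm (RSet × NQuad n), IsGraphAut (Lam n) g →
      (∀ u : RSet, ∃ u' : RSet,
        g '' {p : RSet × NQuad n | p.1 = u} = {p : RSet × NQuad n | p.1 = u'}) →
      (fun p => sigmaVec n (g p) + sigmaVec n p) ∈ eigOne (Lam n)) ∧
    (Lam n).Adj (idR, 0) (aR, 0) ∧
    sigmaVec n (idR, 0) = 0 ∧ sigmaVec n (aR, 0) = 1 ∧
    (∀ u : RSet × NQuad n, (Lam n).Adj (idR, 0) u → u ≠ (aR, 0) → sigmaVec n u = 0) := by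
  haveI : NeZero n := ⟨by omega⟩
  refine ⟨?_, ?_, ?_, ?_, ?_⟩
  · -- part (i)
    intro g hAut hFib
    classical
    choose π hπ using hFib
    have hfst : ∀ p : RSet × NQuad n, (g p).1 = π p.1 := by
      intro p
      have hm : g p ∈ {q : RSet × NQuad n | q.1 = π p.1} := by
        rw [← hπ p.1]; exact ⟨p, rfl, rfl⟩
      exact hm
    have hπinj : Function.Injective π := by
      intro u u' h
      have h1 : g (u, (0 : NQuad n)) ∈ {q : RSet × NQuad n | q.1 = π u'} := by
        rw [← h]; exact hfst (u, 0)
      rw [← hπ u'] at h1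
      obtain ⟨q, hq1, hq2⟩ := h1
      have hq : q = (u, (0 : NQuad n)) := g.injective hq2
      rw [hq] at hq1
      exact hq1
    have hπadj : ∀ u v : RSet, MK.Adj u v → MK.Adj (π u) (π v) := by
      intro u v huv
      have hadj : (Lam n).Adj (u, 0) (v, castQuad n (zetaZ u v)) := ⟨huv, (zero_add _).symm⟩
      have h2 := ((hAut (u, 0) (v, castQuad n (zetaZ u v))).mpr hadj).1
      rwa [hfst, hfst] at h2
    rw [mem_eigOne_iff]
    intro p
    have hNF : (Lam n).neighborFinset p = {nbr n aR p, nbr n bR p, nbr n cR p} := by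
      ext q
      simp only [SimpleGraph.mem_neighborFinset, Lam_adj_iff, Finset.mem_insert,
        Finset.mem_singleton]
    have d1 : nbr n aR p ≠ nbr n bR p := fun h => rmul_ab_ne p.1 (congrArg Prod.fst h)
    have d2 : nbr n aR p ≠ nbr n cR p := fun h => rmul_ac_ne p.1 (congrArg Prod.fst h)
    have d3 : nbr n bR p ≠ nbr n cR p := fun h => rmul_bc_ne p.1 (congrArg Prod.fst h)
    rw [hNF, Finset.sum_insert (by simp [d1, d2]), Finset.sum_insert (by simp [d3]),
      Finset.sum_singleton]
    have hf : ∀ q : RSet × NQuad n,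
        sigmaVec n (g q) + sigmaVec n q = chiF (π q.1) + chiF q.1 := by
      intro q; rw [sigmaVec_eq_chiF, sigmaVec_eq_chiF, hfst]
    simp only [hf, nbr]
    have hx1 := (hπadj p.1 (rmul aR p.1) (MK_adj_a p.1)).2
    have hx2 := (hπadj p.1 (rmul bR p.1) (MK_adj_b p.1)).2
    have hx3 := (hπadj p.1 (rmul cR p.1) (MK_adj_c p.1)).2
    have hd1 : π (rmul aR p.1) ≠ π (rmul bR p.1) := fun h => rmul_ab_ne p.1 (hπinj h)
    have hd2 : π (rmul aR p.1) ≠ π (rmul cR p.1) := fun h => rmul_ac_ne p.1 (hπinj h)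
    have hd3 : π (rmul bR p.1) ≠ π (rmul cR p.1) := fun h => rmul_bc_ne p.1 (hπinj h)
    have hperm := sum3_perm chiF _ _ _ _ _ _ hd1 hd2 hd3 hx1 hx2 hx3
    have hA := hperm.trans (chiF_sum (π p.1))
    have hB := chiF_sum p.1
    have h2 : (1 + 1 : ZMod 2) = 0 := rfl
    linear_combination hA + hB + h2
  · -- adjacency of (id,0) and (a,0)
    refine ⟨⟨show idR ≠ aR from by decide, Or.inl (show aR = rmul aR idR from by decide)⟩, ?_⟩
    show (0 : NQuad n) = 0 + castQuad n (zetaZ idR aR)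
    rw [show zetaZ idR aR = 0 from by decide, castQuad_zero, add_zero]
  · simp only [sigmaVec]
    exact if_neg (by decide)
  · simp only [sigmaVec]
    exact if_pos (by decide)
  · intro u hadj hne
    rw [Lam_adj_iff] at hadj
    rcases hadj with rfl | rfl | rfl
    · refine absurd (Prod.ext_iff.mpr ⟨show rmul aR idR = aR from by decide, ?_⟩) hne
      show (0 : NQuad n) + castQuad n (zetaZ idR (rmul aR idR)) = 0
      rw [zetaZ_id_a, castQuad_zero, add_zero]
    · simp only [sigmaVec]
      exact if_neg (show ¬(rmul bR idR = aR ∨ rmul bR idR = azR ∨ rmul bR idR = bcR ∨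
        rmul bR idR = bczR) from by decide)
    · simp only [sigmaVec]
      exact if_neg (show ¬(rmul cR idR = aR ∨ rmul cR idR = azR ∨ rmul cR idR = bcR ∨
        rmul cR idR = bczR) from by decide)
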